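/- For any c, d ∈ ℝ with c ≥ 0 and any well-posed instance (G, v₀), the lex-minimizer commutes with affine maps: lex[c·v₀ + d] = c·lex[v₀] + d. -/

import Mathlib

/-- Total length of a walk in a graph with edge lengths `ℓ`. -/
noncomputable def walkLen {V : Type*} (ℓ : Sym2 V → ℝ) {G : SimpleGraph V} {u v : V}
    (p : G.Walk u v) : ℝ :=
  (p.darts.map fun d => ℓ d.edge).sum

/-- Shortest-path distance induced by edge lengths `ℓ`. -/
noncomputable def gdist {V : Type*} (G : SimpleGraph V) (ℓ : Sym2 V → ℝ) (u v : V) : ℝ :=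
  sInf {x | ∃ p : G.Walk u v, walkLen ℓ p = x}

/-- Absolute gradient `|v x - v y| / ℓ(x,y)` of `v` on the unordered pair `e`. -/
noncomputable def absGrad {V : Type*} (ℓ : Sym2 V → ℝ) (v : V → ℝ) (e : Sym2 V) : ℝ :=
  Sym2.lift ⟨fun x y => |v x - v y|, fun x y => abs_sub_comm (v x) (v y)⟩ e / ℓ e

/-- The absolute edge gradients of `v`, sorted in decreasing order. -/
noncomputable def gradList {V : Type*} [Fintype V] [DecidableEq V] (G : SimpleGraph V)
    [DecidableRel G.Adj] (ℓ : Sym2 V → ℝ) (v : V → ℝ) : List ℝ :=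
  (G.edgeFinset.val.map (absGrad ℓ v)).sort (· ≥ ·)

lemma lex_map_aux {f : ℝ → ℝ} (hf : StrictMono f) :
    ∀ {l₁ l₂ : List ℝ}, List.Lex (· < ·) l₁ l₂ →
      List.Lex (· < ·) (l₁.map f) (l₂.map f) := by
  intro l₁ l₂ h
  induction h with
  | nil => exact List.Lex.nil
  | @cons a l₁ l₂ h ih => exact List.Lex.cons ih
  | @rel a l₁ b l₂ hab => exact List.Lex.rel (hf hab)

lemma no_lex_aux : ∀ (l₁ l₂ : List ℝ), l₁.length = l₂.length →
    (∀ x ∈ l₁, 0 ≤ x) → (∀ x ∈ l₂, x ≤ 0) → ¬ List.Lex (· < ·) l₁ l₂ := by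
  intro l₁ l₂ hlen h1 h2 h
  induction h with
  | nil => simp at hlen
  | @cons a l₁ l₂ h ih =>
      exact ih (by simpa using hlen) (fun x hx => h1 x (List.mem_cons_of_mem _ hx))
        (fun x hx => h2 x (List.mem_cons_of_mem _ hx))
  | @rel a l₁ b l₂ hab =>
      exact absurd hab (not_lt.2 ((h2 b (List.mem_cons_self)).trans
        (h1 a (List.mem_cons_self))))

lemma absGrad_affine {V : Type*} (ℓ : Sym2 V → ℝ) (v : V → ℝ) (c d : ℝ) (hc : 0 ≤ c)
    (e : Sym2 V) : absGrad ℓ (fun x => c * v x + d) e = c * absGrad ℓ v e := by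
  induction e using Sym2.ind with
  | _ x y =>
    simp only [absGrad, Sym2.lift_mk]
    rw [show c * v x + d - (c * v y + d) = c * (v x - v y) by ring,
      abs_mul, abs_of_nonneg hc, mul_div_assoc]

lemma sort_map_mono (f : ℝ → ℝ) (hf : Monotone f) (s : Multiset ℝ) :
    (s.map f).sort (· ≥ ·) = (s.sort (· ≥ ·)).map f := by
  refine (fun hp h1 h2 => List.Perm.eq_of_pairwise' (r := (· ≥ ·)) h1 h2 hp) ?_ ?_ ?_
  · rw [← Multiset.coe_eq_coe, Multiset.sort_eq, ← Multiset.map_coe, Multiset.sort_eq]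
  · exact Multiset.pairwise_sort _ _
  · exact List.Pairwise.map f (fun a b hab => hf hab) (Multiset.pairwise_sort s _)

lemma gradList_affine {V : Type*} [Fintype V] [DecidableEq V] (G : SimpleGraph V)
    [DecidableRel G.Adj] (ℓ : Sym2 V → ℝ) (v : V → ℝ) (c d : ℝ) (hc : 0 ≤ c) :
    gradList G ℓ (fun x => c * v x + d) = (gradList G ℓ v).map (fun r => c * r) := by
  unfold gradList
  rw [show absGrad ℓ (fun x => c * v x + d) = fun e => c * absGrad ℓ v e from
      funext (absGrad_affine ℓ v c d hc),
    show (fun e => c * absGrad ℓ v e) = (fun r => c * r) ∘ absGrad ℓ v from rfl,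
    ← Multiset.map_map, sort_map_mono _ (fun a b hab => by
      exact mul_le_mul_of_nonneg_left hab hc)]

lemma gradList_nonneg {V : Type*} [Fintype V] [DecidableEq V] (G : SimpleGraph V)
    [DecidableRel G.Adj] (ℓ : Sym2 V → ℝ) (hℓ : ∀ e ∈ G.edgeSet, 0 < ℓ e) (v : V → ℝ) :
    ∀ x ∈ gradList G ℓ v, 0 ≤ x := by
  intro x hx
  rw [gradList, Multiset.mem_sort, Multiset.mem_map] at hx
  obtain ⟨e, he, rfl⟩ := hx
  rw [← Finset.mem_def, SimpleGraph.mem_edgeFinset] at he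
  induction e using Sym2.ind with
  | _ a b =>
    simp only [absGrad, Sym2.lift_mk]
    exact div_nonneg (abs_nonneg _) (hℓ _ he).le

lemma gradList_length {V : Type*} [Fintype V] [DecidableEq V] (G : SimpleGraph V)
    [DecidableRel G.Adj] (ℓ : Sym2 V → ℝ) (v : V → ℝ) :
    (gradList G ℓ v).length = G.edgeFinset.card := by
  rw [gradList, Multiset.length_sort, Multiset.card_map]; rfl

/-- The lex-minimizer commutes with affine maps: `lex[c·v₀ + d] = c·lex[v₀] + d` for `c ≥ 0`. -/
theorem lex_min_affine {V : Type*} [Fintype V] [DecidableEq V]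
    (G : SimpleGraph V) [DecidableRel G.Adj] (hG : G.Connected)
    (ℓ : Sym2 V → ℝ) (hℓ : ∀ e ∈ G.edgeSet, 0 < ℓ e)
    (T : Set V) (hT : T.Nonempty) (v₀ : V → ℝ) (c d : ℝ) (hc : 0 ≤ c)
    (u u' : V → ℝ)
    (hext : ∀ t ∈ T, u t = v₀ t)
    (hlex : ∀ w : V → ℝ, (∀ t ∈ T, w t = v₀ t) → w ≠ u →
      List.Lex (· < ·) (gradList G ℓ u) (gradList G ℓ w))
    (hext' : ∀ t ∈ T, u' t = c * v₀ t + d)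
    (hlex' : ∀ w : V → ℝ, (∀ t ∈ T, w t = c * v₀ t + d) → w ≠ u' →
      List.Lex (· < ·) (gradList G ℓ u') (gradList G ℓ w)) :
    ∀ x : V, u' x = c * u x + d := by
  set w : V → ℝ := fun x => c * u x + d with hw
  have hw_ext : ∀ t ∈ T, w t = c * v₀ t + d := fun t ht => by
    simp only [hw, hext t ht]
  suffices h : w = u' by intro x; rw [← h]
  by_contra hne
  have h1 : List.Lex (· < ·) (gradList G ℓ u') (gradList G ℓ w) := hlex' w hw_ext hne
  have hgw : gradList G ℓ w = (gradList G ℓ u).map (fun r => c * r) :=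
    gradList_affine G ℓ u c d hc
  rcases eq_or_lt_of_le hc with hc0 | hcpos
  · -- c = 0
    refine no_lex_aux _ _ ?_ (gradList_nonneg G ℓ hℓ u') ?_ h1
    · rw [hgw, List.length_map, gradList_length, gradList_length]
    · rw [hgw]
      intro x hx
      rw [List.mem_map] at hx
      obtain ⟨r, _, rfl⟩ := hx
      rw [← hc0]; simp
  · -- c > 0
    set w' : V → ℝ := fun x => c⁻¹ * u' x + (-(c⁻¹ * d)) with hw'
    have hcne : c ≠ 0 := ne_of_gt hcpos
    have hw'_ext : ∀ t ∈ T, w' t = v₀ t := fun t ht => by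
      simp only [hw', hext' t ht]; field_simp; ring
    have hw'_ne : w' ≠ u := by
      intro h
      apply hne
      funext x
      have : u x = c⁻¹ * u' x + (-(c⁻¹ * d)) := by rw [← h]
      simp only [hw, this]; field_simp; ring
    have h2 : List.Lex (· < ·) (gradList G ℓ u) (gradList G ℓ w') := hlex w' hw'_ext hw'_ne
    have hgw' : gradList G ℓ w' = (gradList G ℓ u').map (fun r => c⁻¹ * r) :=
      gradList_affine G ℓ u' c⁻¹ (-(c⁻¹ * d)) (by positivity)
    rw [hgw'] at h2
    have h2' := lex_map_aux (f := fun r => c * r)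
      (fun a b hab => by exact (mul_lt_mul_iff_right₀ hcpos).2 hab) h2
    rw [List.map_map, show ((fun r => c * r) ∘ fun r => c⁻¹ * r) = id from
      funext fun r => by simp only [Function.comp_apply, id]; field_simp, List.map_id] at h2'
    rw [hgw] at h1
    exact asymm h1 h2'
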